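/- Let K ≥ 1 be an integer and A ≤ 0 a real number. Let q ∈ 𝒴 be such that for every i either q_i = 0 or q_i ≥ exp(A). Then the reverse cross-entropy loss ℓ(u, q) = −∑_{i=1}^K u_i · L_A(q_i) satisfies, for all a, b ∈ ℝ^K, |ℓ(S(a), q) − ℓ(S(b), q)| ≤ −√2 · K · A · ‖a − b‖₂. -/

import Mathlib

open scoped BigOperators

/-- The softmax function `S(x)_i = exp(x_i) / ∑_j exp(x_j)` on `ℝ^K`. -/
noncomputable def softmax {K : ℕ} (x : Fin K → ℝ) : Fin K → ℝ :=
  fun i => Real.exp (x i) / ∑ j, Real.exp (x j)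

/-- The modified logarithm encoding the convention `log 0 := A`:
`L_A(t) = log t` for `t ≠ 0` and `L_A(0) = A`. -/
noncomputable def logA (A : ℝ) (t : ℝ) : ℝ := if t = 0 then A else Real.log t


lemma abs_softmax_sub_le {K : ℕ} (hK : 1 ≤ K) (x y : Fin K → ℝ) (i : Fin K) :
    |softmax x i - softmax y i| ≤ Real.sqrt 2 * Real.sqrt (∑ j, (x j - y j) ^ 2) := by
  haveI : Nonempty (Fin K) := ⟨⟨0, hK⟩⟩
  set d : Fin K → ℝ := fun j => y j - x j with hd
  set C : ℝ := Real.sqrt 2 * Real.sqrt (∑ j, (x j - y j) ^ 2) with hC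
  set N : ℝ → ℝ := fun t => ∑ j, Real.exp (x j + t * d j) with hN
  have hNpos : ∀ t, 0 < N t := fun t =>
    Finset.sum_pos (fun j _ => Real.exp_pos _) Finset.univ_nonempty
  set f : ℝ → ℝ := fun t => Real.exp (x i + t * d i) / N t with hf
  -- derivative of each exponential
  have hE : ∀ (j : Fin K) (t : ℝ),
      HasDerivAt (fun t => Real.exp (x j + t * d j)) (d j * Real.exp (x j + t * d j)) t := by
    intro j t
    have h1 : HasDerivAt (fun t : ℝ => x j + t * d j) (d j) t := by
      simpa using ((hasDerivAt_id t).mul_const (d j)).const_add (x j)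
    exact h1.exp.congr_deriv (mul_comm _ _)
  have hNd : ∀ t, HasDerivAt N (∑ j, d j * Real.exp (x j + t * d j)) t := by
    intro t
    exact HasDerivAt.fun_sum (fun j _ => hE j t)
  have hfd : ∀ t, HasDerivAt f
      ((d i * Real.exp (x i + t * d i) * N t -
        Real.exp (x i + t * d i) * ∑ j, d j * Real.exp (x j + t * d j)) / (N t) ^ 2) t := by
    intro t
    exact (hE i t).div (hNd t) (hNpos t).ne'
  -- bound on the derivative
  have hbound : ∀ t : ℝ,
      |(d i * Real.exp (x i + t * d i) * N t -
        Real.exp (x i + t * d i) * ∑ j, d j * Real.exp (x j + t * d j)) / (N t) ^ 2| ≤ C := by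
    intro t
    set S : Fin K → ℝ := fun j => Real.exp (x j + t * d j) / N t with hS
    have hSnn : ∀ j, 0 ≤ S j := fun j => div_nonneg (Real.exp_pos _).le (hNpos t).le
    have hSle : ∀ j, S j ≤ 1 := by
      intro j
      rw [hS, div_le_one (hNpos t)]
      show Real.exp (x j + t * d j) ≤ ∑ k, Real.exp (x k + t * d k)
      exact Finset.single_le_sum (fun k (_ : k ∈ Finset.univ) => (Real.exp_pos (x k + t * d k)).le)
        (Finset.mem_univ j)
    have hSsum : ∑ j, S j = 1 := by
      rw [hS, ← Finset.sum_div, div_self (hNpos t).ne']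
    have key : (d i * Real.exp (x i + t * d i) * N t -
        Real.exp (x i + t * d i) * ∑ j, d j * Real.exp (x j + t * d j)) / (N t) ^ 2
        = S i * (∑ j, S j * (d i - d j)) := by
      have h2 : ∑ j, S j * (d i - d j) = d i - ∑ j, S j * d j := by
        have : ∑ j, S j * (d i - d j) = (∑ j, S j) * d i - ∑ j, S j * d j := by
          rw [Finset.sum_mul, ← Finset.sum_sub_distrib]
          congr 1; ext j; ring
        rw [this, hSsum, one_mul]
      rw [h2, hS]
      have hsum : ∑ j, Real.exp (x j + t * d j) / N t * d j
          = (∑ j, d j * Real.exp (x j + t * d j)) / N t := by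
        rw [eq_div_iff (hNpos t).ne', Finset.sum_mul]
        refine Finset.sum_congr rfl fun j _ => ?_
        field_simp [(hNpos t).ne']
      rw [hsum]
      field_simp [(hNpos t).ne']
    rw [key]
    have hij : ∀ j, |d i - d j| ≤ C := by
      intro j
      have h1 : (d i - d j) ^ 2 ≤ 2 * ∑ k, (x k - y k) ^ 2 := by
        have h2 : (d i - d j) ^ 2 ≤ 2 * ((x i - y i) ^ 2 + (x j - y j) ^ 2) := by
          simp only [hd]; nlinarith [sq_nonneg (y i - x i + (y j - x j))]
        rcases eq_or_ne i j with rfl | hne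
        · have hz : (d i - d i) ^ 2 = 0 := by ring
          rw [hz]
          positivity
        · have h3 : (x i - y i) ^ 2 + (x j - y j) ^ 2 ≤ ∑ k, (x k - y k) ^ 2 := by
            have hsub : ∑ k ∈ ({i, j} : Finset (Fin K)), (x k - y k) ^ 2
                ≤ ∑ k, (x k - y k) ^ 2 :=
              Finset.sum_le_sum_of_subset_of_nonneg (Finset.subset_univ _)
                (fun k _ _ => sq_nonneg _)
            rwa [Finset.sum_pair hne] at hsub
          linarith
      calc |d i - d j| = Real.sqrt ((d i - d j) ^ 2) := (Real.sqrt_sq_eq_abs _).symm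
        _ ≤ Real.sqrt (2 * ∑ k, (x k - y k) ^ 2) := Real.sqrt_le_sqrt h1
        _ = C := by rw [hC, ← Real.sqrt_mul (by norm_num : (0:ℝ) ≤ 2)]
    have hCnn : 0 ≤ C := mul_nonneg (Real.sqrt_nonneg _) (Real.sqrt_nonneg _)
    calc |S i * ∑ j, S j * (d i - d j)|
        = S i * |∑ j, S j * (d i - d j)| := by
          rw [abs_mul, abs_of_nonneg (hSnn i)]
      _ ≤ 1 * |∑ j, S j * (d i - d j)| := by
          exact mul_le_mul_of_nonneg_right (hSle i) (abs_nonneg _)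
      _ = |∑ j, S j * (d i - d j)| := one_mul _
      _ ≤ ∑ j, |S j * (d i - d j)| := Finset.abs_sum_le_sum_abs _ _
      _ ≤ ∑ j, S j * C := by
          apply Finset.sum_le_sum
          intro j _
          rw [abs_mul, abs_of_nonneg (hSnn j)]
          exact mul_le_mul_of_nonneg_left (hij j) (hSnn j)
      _ = C := by rw [← Finset.sum_mul, hSsum, one_mul]
  -- MVT
  have hmvt := convex_univ.norm_image_sub_le_of_norm_hasDerivWithin_le
    (f := f) (C := C)
    (fun t (_ : t ∈ Set.univ) => (hfd t).hasDerivWithinAt)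
    (fun t (_ : t ∈ Set.univ) => by rw [Real.norm_eq_abs]; exact hbound t)
    (Set.mem_univ (0:ℝ)) (Set.mem_univ (1:ℝ))
  have hf0 : f 0 = softmax x i := by simp [hf, hN, softmax]
  have hf1 : f 1 = softmax y i := by simp [hf, hN, hd, softmax]
  have : ‖f 1 - f 0‖ ≤ C * ‖(1:ℝ) - 0‖ := hmvt
  rw [hf0, hf1] at this
  simpa [abs_sub_comm] using this

/-- The reverse cross-entropy loss `ℓ(u,q) = −∑_i u_i L_A(q_i)` composed with the softmax
is `(−√2·K·A)`-Lipschitz with respect to the Euclidean norm, for labels `q` in the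
probability simplex whose coordinates are either `0` or at least `exp A`. -/
theorem rce_loss_softmax_lipschitz (K : ℕ) (hK : 1 ≤ K) (A : ℝ) (hA : A ≤ 0)
    (q : Fin K → ℝ) (hq01 : ∀ i, q i ∈ Set.Icc (0 : ℝ) 1) (hqsum : ∑ i, q i = 1)
    (hqA : ∀ i, q i = 0 ∨ Real.exp A ≤ q i)
    (a b : Fin K → ℝ) :
    |(-∑ i, softmax a i * logA A (q i)) - (-∑ i, softmax b i * logA A (q i))|
      ≤ -(Real.sqrt 2 * K * A * Real.sqrt (∑ j, (a j - b j) ^ 2)) := by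
  haveI : Nonempty (Fin K) := ⟨⟨0, hK⟩⟩
  set D : ℝ := Real.sqrt (∑ j, (a j - b j) ^ 2) with hD
  have hl : ∀ i, |logA A (q i)| ≤ -A := by
    intro i
    rcases hqA i with h0 | hge
    · rw [logA, if_pos h0]
      exact (abs_of_nonpos hA).le
    · have hpos : 0 < q i := lt_of_lt_of_le (Real.exp_pos A) hge
      rw [logA, if_neg hpos.ne']
      have h1 : A ≤ Real.log (q i) := by
        have := Real.log_le_log (Real.exp_pos A) hge
        rwa [Real.log_exp] at this
      have h2 : Real.log (q i) ≤ 0 := Real.log_nonpos hpos.le (hq01 i).2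
      rw [abs_le]
      constructor <;> linarith
  have key : ∀ i, |softmax b i - softmax a i| ≤ Real.sqrt 2 * D := by
    intro i
    have h := abs_softmax_sub_le hK a b i
    rwa [abs_sub_comm] at h
  have hdiff : (-∑ i, softmax a i * logA A (q i)) - (-∑ i, softmax b i * logA A (q i))
      = ∑ i, (softmax b i - softmax a i) * logA A (q i) := by
    rw [neg_sub_neg, ← Finset.sum_sub_distrib]
    exact Finset.sum_congr rfl fun i _ => (sub_mul _ _ _).symm
  rw [hdiff]
  calc |∑ i, (softmax b i - softmax a i) * logA A (q i)|
      ≤ ∑ i, |(softmax b i - softmax a i) * logA A (q i)| :=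
        Finset.abs_sum_le_sum_abs _ _
    _ ≤ ∑ _i : Fin K, (Real.sqrt 2 * D) * (-A) := by
        refine Finset.sum_le_sum fun i _ => ?_
        rw [abs_mul]
        exact mul_le_mul (key i) (hl i) (abs_nonneg _) (by positivity)
    _ = (K : ℝ) * ((Real.sqrt 2 * D) * (-A)) := by
        rw [Finset.sum_const, Finset.card_univ, Fintype.card_fin, nsmul_eq_mul]
    _ = -(Real.sqrt 2 * K * A * D) := by ring
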